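/- If A is an Eulerian (or pseudo-Eulerian) strongly connected synchronizing n-state automaton, then 𝔠(A) ≤ 1 + (n−1)(n−2). -/

import Mathlib

open Matrix

/-- The 0-1 transition matrix of a letter: `(p,q)`-entry is 1 iff `δ q a = p`. -/
def letterMat {n k : ℕ} (δ : Fin n → Fin k → Fin n) (a : Fin k) :
    Matrix (Fin n) (Fin n) ℝ :=
  fun p q => if δ q a = p then 1 else 0

/-- The matrix of a word, satisfying `[u][K] = [K·u]`. -/
def wordMat {n k : ℕ} (δ : Fin n → Fin k → Fin n) (w : List (Fin k)) :
    Matrix (Fin n) (Fin n) ℝ :=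
  (w.reverse.map (letterMat δ)).prod

/-- The action of a word on a state. -/
def act {n k : ℕ} (δ : Fin n → Fin k → Fin n) (w : List (Fin k)) (q : Fin n) : Fin n :=
  w.foldl δ q

/-- A word is a reset word if it maps all states to one state. -/
def IsReset {n k : ℕ} (δ : Fin n → Fin k → Fin n) (w : List (Fin k)) : Prop :=
  ∀ p q : Fin n, act δ w p = act δ w q

section Aux

variable {n k : ℕ}

lemma act_cons' (δ : Fin n → Fin k → Fin n) (a : Fin k) (u : List (Fin k)) (q : Fin n) :
    act δ (a :: u) q = act δ u (δ q a) := rfl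

lemma act_append' (δ : Fin n → Fin k → Fin n) (u v : List (Fin k)) (q : Fin n) :
    act δ (u ++ v) q = act δ v (act δ u q) := by
  simp [act, List.foldl_append]

/-- The twisted indicator vector of the preimage of `C` under the word `u`. -/
noncomputable def zvAux (δ : Fin n → Fin k → Fin n) (C : Finset (Fin n)) (u : List (Fin k)) :
    Fin n → ℝ :=
  fun q => (if act δ u q ∈ C then (1 : ℝ) else 0) - (C.card : ℝ) / (n : ℝ)

/-- The number of states mapped into `C` by `u`. -/
def cntAux (δ : Fin n → Fin k → Fin n) (C : Finset (Fin n)) (u : List (Fin k)) : ℕ :=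
  (Finset.univ.filter (fun q => act δ u q ∈ C)).card

noncomputable def VtAux (δ : Fin n → Fin k → Fin n) (C : Finset (Fin n)) (t : ℕ) :
    Submodule ℝ (Fin n → ℝ) :=
  Submodule.span ℝ (zvAux δ C '' {u | u.length ≤ t})

lemma zv_cons (δ : Fin n → Fin k → Fin n) (C : Finset (Fin n)) (a : Fin k) (u : List (Fin k)) :
    zvAux δ C (a :: u) = LinearMap.funLeft ℝ ℝ (fun q => δ q a) (zvAux δ C u) := by
  funext q
  simp [zvAux, act_cons', LinearMap.funLeft_apply]
  exact if_congr Iff.rfl rfl rfl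

lemma Vt_mono (δ : Fin n → Fin k → Fin n) (C : Finset (Fin n)) {s t : ℕ} (h : s ≤ t) :
    VtAux δ C s ≤ VtAux δ C t := by
  apply Submodule.span_mono
  exact Set.image_mono (fun u hu => le_trans hu h)

lemma zv_mem_Vt (δ : Fin n → Fin k → Fin n) (C : Finset (Fin n)) {t : ℕ} {u : List (Fin k)}
    (h : u.length ≤ t) : zvAux δ C u ∈ VtAux δ C t :=
  Submodule.subset_span ⟨u, h, rfl⟩

lemma Vt_map_le (δ : Fin n → Fin k → Fin n) (C : Finset (Fin n)) (a : Fin k) (t : ℕ) :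
    Submodule.map (LinearMap.funLeft ℝ ℝ (fun q => δ q a)) (VtAux δ C t) ≤ VtAux δ C (t + 1) := by
  rw [VtAux, Submodule.map_span]
  apply Submodule.span_le.2
  rintro x ⟨-, ⟨u, hu, rfl⟩, rfl⟩
  exact zv_mem_Vt δ C (t := t + 1) (u := a :: u) (by simpa using Nat.succ_le_succ hu)

lemma Vt_succ_le (δ : Fin n → Fin k → Fin n) (C : Finset (Fin n)) {t : ℕ}
    (h : ∀ a : Fin k, Submodule.map (LinearMap.funLeft ℝ ℝ (fun q => δ q a)) (VtAux δ C t)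
      ≤ VtAux δ C t) :
    VtAux δ C (t + 1) ≤ VtAux δ C t := by
  apply Submodule.span_le.2
  rintro x ⟨u, hu, rfl⟩
  match u with
  | [] => exact zv_mem_Vt δ C (Nat.zero_le t)
  | a :: w =>
    have hw : w.length ≤ t := by simpa using hu
    rw [zv_cons]
    exact h a ⟨zvAux δ C w, zv_mem_Vt δ C hw, rfl⟩

/-- Stabilization: every `zvAux` vector lies in the span of those for words of length `≤ n-1`. -/
lemma zv_mem_all (δ : Fin n → Fin k → Fin n) (C : Finset (Fin n))
    (hC0 : C.Nonempty) (hC : C.card < n) (u : List (Fin k)) :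
    zvAux δ C u ∈ VtAux δ C (n - 1) := by
  have hn0 : 0 < n := lt_of_le_of_lt (Nat.zero_le _) hC
  -- the empty-word vector is nonzero
  obtain ⟨c, hc⟩ := hC0
  have hne : zvAux δ C [] ≠ 0 := by
    intro h
    have h1 : zvAux δ C [] c = 0 := by rw [h]; rfl
    have h2 : (C.card : ℝ) / (n : ℝ) < 1 := by
      rw [div_lt_one (by exact_mod_cast hn0)]
      exact_mod_cast hC
    simp only [zvAux, act, List.foldl_nil, if_pos hc] at h1
    have h3 : (1:ℝ) - (C.card : ℝ) / n = 0 := by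
      rw [← h1]
      exact congrArg (· - (C.card : ℝ) / n) (if_pos (show act δ [] c ∈ C from hc)).symm
    linarith
  -- there is a stabilization time `< n`
  have hstab : ∃ t, t < n ∧ VtAux δ C (t + 1) ≤ VtAux δ C t := by
    by_contra hcon
    push_neg at hcon
    have hlt : ∀ t, t < n → VtAux δ C t < VtAux δ C (t + 1) := fun t ht =>
      lt_of_le_not_ge (Vt_mono δ C (Nat.le_succ t)) (hcon t ht)
    have hrank : ∀ t, t ≤ n → t + 1 ≤ Module.finrank ℝ (VtAux δ C t) := by
      intro t
      induction t with
      | zero =>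
        intro _
        have hb : VtAux δ C 0 ≠ ⊥ := by
          intro hbot
          have := zv_mem_Vt δ C (t := 0) (u := ([] : List (Fin k))) le_rfl
          rw [hbot, Submodule.mem_bot] at this
          exact hne this
        have := (Submodule.finrank_eq_zero (R := ℝ) (M := Fin n → ℝ)
          (S := VtAux δ C 0)).not.mpr hb
        omega
      | succ t ih =>
        intro ht
        have h1 := ih (Nat.le_of_succ_le ht)
        have h2 := Submodule.finrank_lt_finrank_of_lt (hlt t (Nat.lt_of_succ_le ht))
        omega
    have h1 := hrank n le_rfl
    have h2 : Module.finrank ℝ (VtAux δ C n) ≤ Module.finrank ℝ (Fin n → ℝ) :=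
      Submodule.finrank_le _
    rw [Module.finrank_fintype_fun_eq_card, Fintype.card_fin] at h2
    omega
  obtain ⟨t0, ht0, hstab⟩ := hstab
  have hclosed : ∀ v : List (Fin k), zvAux δ C v ∈ VtAux δ C t0 := by
    intro v
    induction v with
    | nil => exact zv_mem_Vt δ C (Nat.zero_le t0)
    | cons a w ih =>
      rw [zv_cons]
      exact hstab (Vt_map_le δ C a t0 ⟨zvAux δ C w, ih, rfl⟩)
  exact Vt_mono δ C (by omega) (hclosed u)


lemma key_avg (δ : Fin n → Fin k → Fin n) (p : Fin k → ℝ)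
    (hrow : ∀ i, ∑ j, (∑ a, p a • letterMat δ a) i j = 1) (D : Finset (Fin n)) :
    ∑ a, p a * ((Finset.univ.filter (fun q => δ q a ∈ D)).card : ℝ) = (D.card : ℝ) := by
  have hS : ∀ i j, (∑ a, p a • letterMat δ a) i j = ∑ a, p a * (if δ j a = i then 1 else 0) := by
    intro i j
    simp [letterMat, Matrix.sum_apply, smul_eq_mul]
  calc ∑ a, p a * ((Finset.univ.filter (fun q => δ q a ∈ D)).card : ℝ)
      = ∑ a, ∑ q, p a * (if δ q a ∈ D then 1 else 0) := by
        refine Finset.sum_congr rfl fun a _ => ?_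
        rw [← Finset.sum_boole, Finset.mul_sum]
    _ = ∑ q, ∑ a, p a * (if δ q a ∈ D then 1 else 0) := Finset.sum_comm
    _ = ∑ q, ∑ a, ∑ i ∈ D, p a * (if δ q a = i then 1 else 0) := by
        refine Finset.sum_congr rfl fun q _ => Finset.sum_congr rfl fun a _ => ?_
        simp only [mul_ite, mul_one, mul_zero, Finset.sum_ite_eq]
    _ = ∑ i ∈ D, ∑ q, ∑ a, p a * (if δ q a = i then 1 else 0) := by
        refine Eq.trans (Finset.sum_congr rfl fun q _ => Finset.sum_comm) ?_
        exact Finset.sum_comm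
    _ = ∑ i ∈ D, (1 : ℝ) := by
        refine Finset.sum_congr rfl fun i _ => ?_
        have := hrow i
        simp only [hS] at this
        exact this
    _ = (D.card : ℝ) := by simp

lemma extend_lemma (hn : 2 ≤ n) (δ : Fin n → Fin k → Fin n)
    (hsc : ∀ s q : Fin n, ∃ w : List (Fin k), act δ w s = q)
    (hsync : ∃ w, IsReset δ w)
    (p : Fin k → ℝ) (hp : ∀ a, 0 < p a) (hp1 : ∑ a, p a = 1)
    (hrow : ∀ i, ∑ j, (∑ a, p a • letterMat δ a) i j = 1)
    (C : Finset (Fin n)) (hC0 : C.Nonempty) (hC : C.card < n) :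
    ∃ u : List (Fin k), u.length ≤ n - 1 ∧ C.card < cntAux δ C u := by
  by_contra hcon
  push_neg at hcon
  have hn0 : (0:ℝ) < (n:ℝ) := by exact_mod_cast Nat.lt_of_lt_of_le Nat.zero_lt_two hn
  -- every short word has preimage-count exactly `C.card`
  have heq : ∀ u : List (Fin k), u.length ≤ n - 1 → (cntAux δ C u : ℝ) = (C.card : ℝ) := by
    intro u
    induction u with
    | nil =>
      intro _
      exact congrArg Nat.cast (congrArg Finset.card (Finset.filter_univ_mem C))
    | cons a w ih =>
      intro hlen
      have hwlen : w.length ≤ n - 1 := by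
        simp only [List.length_cons] at hlen; omega
      have hIH := ih hwlen
      set D := Finset.univ.filter (fun q => act δ w q ∈ C) with hD
      have hc2 : ∀ b : Fin k,
          (Finset.univ.filter (fun q => δ q b ∈ D)).card = cntAux δ C (b :: w) := by
        intro b
        unfold cntAux
        congr 1
        apply Finset.filter_congr
        intro q _
        simp [hD, act_cons']
      have hkey := key_avg δ p hrow D
      have hDcard : (D.card : ℝ) = (C.card : ℝ) := by
        have : D.card = cntAux δ C w := rfl
        rw [this]; exact hIH
      have e2 : ∑ b, p b * (cntAux δ C (b :: w) : ℝ) = (C.card : ℝ) := by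
        rw [← hDcard, ← hkey]
        exact Finset.sum_congr rfl fun b _ => by rw [hc2 b]
      have e1 : ∑ b, p b * (C.card : ℝ) = (C.card : ℝ) := by
        rw [← Finset.sum_mul, hp1, one_mul]
      have hle : ∀ b : Fin k, (cntAux δ C (b :: w) : ℝ) ≤ (C.card : ℝ) := by
        intro b
        exact_mod_cast hcon (b :: w) (by simp only [List.length_cons] at hlen ⊢; omega)
      have hsum0 : ∑ b, p b * ((C.card : ℝ) - (cntAux δ C (b :: w) : ℝ)) = 0 := by
        simp only [mul_sub]
        rw [Finset.sum_sub_distrib, e1, e2, sub_self]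
      have hall := (Finset.sum_eq_zero_iff_of_nonneg
        (fun b _ => mul_nonneg (hp b).le (sub_nonneg.2 (hle b)))).1 hsum0 a (Finset.mem_univ a)
      rcases mul_eq_zero.1 hall with h | h
      · exact absurd h (ne_of_gt (hp a))
      · linarith [sub_eq_zero.1 h]
  -- the linear functional summing coordinates
  set φ : (Fin n → ℝ) →ₗ[ℝ] ℝ := ∑ q : Fin n, LinearMap.proj q with hφdef
  have hφ : ∀ f : Fin n → ℝ, φ f = ∑ q, f q := by
    intro f
    simp [hφdef]
  have hφgen : ∀ u : List (Fin k), φ (zvAux δ C u) = (cntAux δ C u : ℝ) - (C.card : ℝ) := by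
    intro u
    rw [hφ]
    simp only [zvAux]
    rw [Finset.sum_sub_distrib, Finset.sum_boole, Finset.sum_const, Finset.card_univ,
      Fintype.card_fin, nsmul_eq_mul, mul_div_cancel₀ _ (ne_of_gt hn0)]
    rfl
  have hker : VtAux δ C (n - 1) ≤ LinearMap.ker φ := by
    rw [VtAux]
    apply Submodule.span_le.2
    rintro x ⟨u, hu, rfl⟩
    rw [SetLike.mem_coe, LinearMap.mem_ker, hφgen, heq u hu, sub_self]
  -- a word sending everything into C
  obtain ⟨w0, hw0⟩ := hsync
  obtain ⟨c, hc⟩ := hC0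
  have q0 : Fin n := ⟨0, by omega⟩
  obtain ⟨v, hv⟩ := hsc (act δ w0 q0) c
  have hu0 : ∀ q, act δ (w0 ++ v) q ∈ C := by
    intro q
    rw [act_append', hw0 q q0, hv]
    exact hc
  have hcnt : cntAux δ C (w0 ++ v) = n := by
    unfold cntAux
    rw [Finset.filter_true_of_mem (fun q _ => hu0 q), Finset.card_univ, Fintype.card_fin]
  have hmem := zv_mem_all δ C ⟨c, hc⟩ hC (w0 ++ v)
  have h0 : φ (zvAux δ C (w0 ++ v)) = 0 := hker hmem
  rw [hφgen, hcnt, sub_eq_zero] at h0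
  have : (n : ℝ) ≠ (C.card : ℝ) := by exact_mod_cast (Nat.ne_of_gt hC)
  exact this h0


lemma exists_merge (δ : Fin n → Fin k → Fin n) (w : List (Fin k)) :
    ∀ p q : Fin n, p ≠ q → act δ w p = act δ w q →
      ∃ (a : Fin k) (r s : Fin n), r ≠ s ∧ δ r a = δ s a := by
  induction w with
  | nil =>
    intro p q hpq h
    exact absurd h hpq
  | cons a w ih =>
    intro p q hpq h
    by_cases hd : δ p a = δ q a
    · exact ⟨a, p, q, hpq, hd⟩
    · exact ih _ _ hd (by simpa [act_cons'] using h)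

lemma grow (hn : 2 ≤ n) (δ : Fin n → Fin k → Fin n)
    (hsc : ∀ s q : Fin n, ∃ w : List (Fin k), act δ w s = q)
    (hsync : ∃ w, IsReset δ w)
    (p : Fin k → ℝ) (hp : ∀ a, 0 < p a) (hp1 : ∑ a, p a = 1)
    (hrow : ∀ i, ∑ j, (∑ a, p a • letterMat δ a) i j = 1) :
    ∀ m : ℕ, ∃ (v : List (Fin k)) (c : Fin n), v.length ≤ 1 + m * (n - 1) ∧
      min n (2 + m) ≤ (Finset.univ.filter (fun q => act δ v q = c)).card := by
  intro m
  induction m with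
  | zero =>
    obtain ⟨w, hw⟩ := hsync
    have h01 : (⟨0, by omega⟩ : Fin n) ≠ ⟨1, by omega⟩ := by
      intro h
      simpa using congrArg Fin.val h
    obtain ⟨a, r, s, hrs, hmerge⟩ := exists_merge δ w _ _ h01 (hw _ _)
    refine ⟨[a], δ r a, by simp, ?_⟩
    have hsub : ({r, s} : Finset (Fin n)) ⊆
        Finset.univ.filter (fun q => act δ [a] q = δ r a) := by
      intro x hx
      rw [Finset.mem_insert, Finset.mem_singleton] at hx
      rcases hx with rfl | rfl
      · exact Finset.mem_filter.2 ⟨Finset.mem_univ _, rfl⟩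
      · exact Finset.mem_filter.2 ⟨Finset.mem_univ _, hmerge.symm⟩
    have hcard2 : ({r, s} : Finset (Fin n)).card = 2 := Finset.card_pair hrs
    have := Finset.card_le_card hsub
    omega
  | succ m ih =>
    obtain ⟨v, c, hlen, hcard⟩ := ih
    have hmul : (m + 1) * (n - 1) = m * (n - 1) + (n - 1) := by ring
    by_cases hfull : n ≤ (Finset.univ.filter (fun q => act δ v q = c)).card
    · exact ⟨v, c, by omega, by omega⟩
    · set B := Finset.univ.filter (fun q => act δ v q = c) with hB
      have hB0 : B.Nonempty := by
        rw [← Finset.card_pos]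
        omega
      have hBlt : B.card < n := by omega
      obtain ⟨u, hulen, hucnt⟩ := extend_lemma hn δ hsc hsync p hp hp1 hrow B hB0 hBlt
      refine ⟨u ++ v, c, ?_, ?_⟩
      · rw [List.length_append]
        omega
      · have hfe : Finset.univ.filter (fun q => act δ (u ++ v) q = c)
            = Finset.univ.filter (fun q => act δ u q ∈ B) := by
          apply Finset.filter_congr
          intro q _
          rw [act_append']
          constructor
          · intro h
            rw [hB, Finset.mem_filter]
            exact ⟨Finset.mem_univ _, h⟩
          · intro h
            rw [hB, Finset.mem_filter] at h
            exact h.2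
        rw [hfe]
        have : B.card < cntAux δ B u := hucnt
        unfold cntAux at this
        omega

end Aux

/-- If `A` is Eulerian or pseudo-Eulerian (some positive probability vector `p`
makes `S = Σ_a p(a)[a]` doubly stochastic), then the reset length is at most
`1 + (n-1)(n-2)`. -/
theorem stmt9 {n k : ℕ} (hn : 2 ≤ n) (δ : Fin n → Fin k → Fin n)
    (hsc : ∀ s q : Fin n, ∃ w : List (Fin k), act δ w s = q)
    (hsync : ∃ w, IsReset δ w)
    (hpe : ∃ p : Fin k → ℝ, (∀ a, 0 < p a) ∧ (∑ a, p a = 1) ∧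
      (∀ j, ∑ i, (∑ a, p a • letterMat δ a) i j = 1) ∧
      (∀ i, ∑ j, (∑ a, p a • letterMat δ a) i j = 1))
    (r : ℕ)
    (hr : IsLeast {t : ℕ | ∃ w : List (Fin k), IsReset δ w ∧ w.length = t} r) :
    r ≤ 1 + (n - 1) * (n - 2) := by
  obtain ⟨p, hp, hp1, _, hrow⟩ := hpe
  obtain ⟨v, c, hlen, hcard⟩ := grow hn δ hsc hsync p hp hp1 hrow (n - 2)
  have hmin : min n (2 + (n - 2)) = n := by omega
  rw [hmin] at hcard
  have hcard' : (Finset.univ.filter (fun q => act δ v q = c)).card = n := by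
    have := Finset.card_filter_le Finset.univ (fun q => act δ v q = c)
    rw [Finset.card_univ, Fintype.card_fin] at this
    omega
  have huniv : Finset.univ.filter (fun q => act δ v q = c) = Finset.univ :=
    Finset.eq_univ_of_card _ (by rw [hcard', Fintype.card_fin])
  have hall : ∀ q : Fin n, act δ v q = c := by
    intro q
    have : q ∈ Finset.univ.filter (fun q => act δ v q = c) := by
      rw [huniv]; exact Finset.mem_univ q
    exact (Finset.mem_filter.1 this).2
  have hreset : IsReset δ v := fun p' q' => by rw [hall p', hall q']
  have hrle : r ≤ v.length := hr.2 ⟨v, hreset, rfl⟩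
  have hmc : 1 + (n - 2) * (n - 1) = 1 + (n - 1) * (n - 2) := by rw [Nat.mul_comm]
  omega
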